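/- Let P ∈ P_m(ℂ^{n×n}) be a regular T-even matrix polynomial of degree m ≥ 1, let λ ∈ ℂ and x ∈ ℂⁿ with x^H x = 1, and let Σ := diag((−1)^{m−1}, (−1)^{m−2}, …, (−1)^0) ∈ ℝ^{m×m}. Let S_e denote the T-even pencils of size mn (L(z) = zX + Y with Xᵀ = −X, Yᵀ = Y) and S_o the T-odd pencils of size mn (Xᵀ = X, Yᵀ = −Y). Then for M ∈ {F, 2}: (1) if |λ| ≤ 1 and L_e ∈ S_e lies in 𝕃₁(P) with right ansatz vector v satisfying Σv = v and ‖v‖₂ = 1, then sqrt((m+1)/(2m)) · η(λ, x, P) ≤ η_M^{S_e}(λ, Λ_{m−1}⊗x, L_e) ≤ √2 · η(λ, x, P); (2) if |λ| ≥ 1 and L_o ∈ S_o lies in 𝕃₁(P) with right ansatz vector v satisfying Σv = −v and ‖v‖₂ = 1, then sqrt((m+1)/(2m)) · η(λ, x, P) ≤ η_M^{S_o}(λ, Λ_{m−1}⊗x, L_o) ≤ √2 · η(λ, x, P). -/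

import Mathlib

open scoped ComplexConjugate
open Matrix

noncomputable section

variable {ι : Type*} [Fintype ι] [DecidableEq ι]

/-- Evaluation of the matrix polynomial with coefficient list `A` at the point `z`. -/
def polyEval {m : ℕ} (A : Fin (m+1) → Matrix ι ι ℂ) (z : ℂ) : Matrix ι ι ℂ :=
  ∑ j : Fin (m+1), z ^ (j : ℕ) • A j

/-- Squared Euclidean norm of a complex vector. -/
def vecNormSq (x : ι → ℂ) : ℝ := ∑ i, ‖x i‖ ^ 2

/-- Euclidean norm of a complex vector. -/
def vecNorm (x : ι → ℂ) : ℝ := Real.sqrt (vecNormSq x)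

/-- `‖(1, z, …, z^m)‖₂²`. -/
def lamNormSq (m : ℕ) (z : ℂ) : ℝ := ∑ j : Fin (m+1), ‖z ^ (j : ℕ)‖ ^ 2

/-- Squared Frobenius norm of a matrix. -/
def frobNormSq (M : Matrix ι ι ℂ) : ℝ := ∑ i, ∑ k, ‖M i k‖ ^ 2

/-- Spectral (operator 2-) norm of a matrix. -/
def specNorm (M : Matrix ι ι ℂ) : ℝ := ‖Matrix.toEuclideanCLM (𝕜 := ℂ) M‖

/-- Frobenius norm of a matrix polynomial: `(Σ_j ‖A_j‖_F²)^{1/2}`. -/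
def polyNormF {m : ℕ} (A : Fin (m+1) → Matrix ι ι ℂ) : ℝ :=
  Real.sqrt (∑ j, frobNormSq (A j))

/-- Spectral norm of a matrix polynomial: `(Σ_j ‖A_j‖₂²)^{1/2}`. -/
def polyNorm2 {m : ℕ} (A : Fin (m+1) → Matrix ι ι ℂ) : ℝ :=
  Real.sqrt (∑ j, specNorm (A j) ^ 2)

/-- Structured backward error of `(lam, x)` as an approximate eigenpair of the matrix
polynomial `A`, with respect to the polynomial norm `N` and the structure class `S`. -/
def eta {m : ℕ} (N : (Fin (m+1) → Matrix ι ι ℂ) → ℝ)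
    (S : Set (Fin (m+1) → Matrix ι ι ℂ)) (lam : ℂ) (x : ι → ℂ)
    (A : Fin (m+1) → Matrix ι ι ℂ) : ℝ :=
  sInf {t | ∃ ΔA ∈ S, (polyEval A lam + polyEval ΔA lam) *ᵥ x = 0 ∧ t = N ΔA}

/-- A matrix polynomial is regular if `det P(z) ≠ 0` for some `z`. -/
def Regular {m : ℕ} (A : Fin (m+1) → Matrix ι ι ℂ) : Prop :=
  ∃ z : ℂ, (polyEval A z).det ≠ 0


/-- The Kronecker product of two vectors. -/
def kronVec {m' n : ℕ} (v : Fin m' → ℂ) (x : Fin n → ℂ) : Fin m' × Fin n → ℂ :=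
  fun p => v p.1 * x p.2

/-- `Λ_{m−1}(z) = (z^{m−1}, …, z, 1)ᵀ`. -/
def lamVec (m : ℕ) (z : ℂ) : Fin m → ℂ := fun i => z ^ (m - 1 - (i : ℕ))

/-- The pencil `L(z) = zX + Y`, encoded by its coefficient list `B` with `B 0 = Y`,
`B 1 = X`, lies in `𝕃₁(P)` with right ansatz vector `v`:
`L(z)·(Λ_{m−1} ⊗ I_n) = v ⊗ P(z)` for all `z` (stated via the action on vectors). -/
def InL1 {n m : ℕ} (A : Fin (m+1) → Matrix (Fin n) (Fin n) ℂ)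
    (B : Fin (1+1) → Matrix (Fin m × Fin n) (Fin m × Fin n) ℂ) (v : Fin m → ℂ) : Prop :=
  ∀ (z : ℂ) (u : Fin n → ℂ),
    polyEval B z *ᵥ kronVec (lamVec m z) u = kronVec v (polyEval A z *ᵥ u)

/-- The class of T-even matrix polynomials (for `m = 1`: T-even pencils `zX + Y` with
`Y` symmetric and `X` skew-symmetric). -/
def TevenPoly {ι : Type*} [Fintype ι] [DecidableEq ι] {m : ℕ} :
    Set (Fin (m+1) → Matrix ι ι ℂ) :=
  {B | ∀ j : Fin (m+1), (Even (j : ℕ) → (B j)ᵀ = B j) ∧ (¬ Even (j : ℕ) → (B j)ᵀ = -(B j))}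

/-- The class of T-odd matrix polynomials (for `m = 1`: T-odd pencils `zX + Y` with
`Y` skew-symmetric and `X` symmetric). -/
def ToddPoly {ι : Type*} [Fintype ι] [DecidableEq ι] {m : ℕ} :
    Set (Fin (m+1) → Matrix ι ι ℂ) :=
  {B | ∀ j : Fin (m+1), (Even (j : ℕ) → (B j)ᵀ = -(B j)) ∧ (¬ Even (j : ℕ) → (B j)ᵀ = B j)}


/-! ### Auxiliary infrastructure -/

section Aux
set_option linter.unusedSectionVars false
set_option linter.unusedVariables false

def toE (x : ι → ℂ) : EuclideanSpace ℂ ι := WithLp.toLp 2 x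

lemma toE_sum {κ : Type*} (s : Finset κ) (f : κ → ι → ℂ) :
    toE (∑ j ∈ s, f j) = ∑ j ∈ s, toE (f j) := by
  induction s using Finset.cons_induction with
  | empty => rfl
  | cons a s ha ih => rw [Finset.sum_cons, Finset.sum_cons, ← ih]; rfl

lemma vecNorm_eq (x : ι → ℂ) : vecNorm x = ‖toE x‖ := by
  rw [EuclideanSpace.norm_eq, vecNorm, vecNormSq]
  try rfl
  try (congr 1; exact Finset.sum_congr rfl fun i _ => by rw [sq]; rfl)

lemma vecNormSq_nonneg (x : ι → ℂ) : 0 ≤ vecNormSq x :=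
  Finset.sum_nonneg fun i _ => sq_nonneg _
lemma frobNormSq_nonneg (M : Matrix ι ι ℂ) : 0 ≤ frobNormSq M :=
  Finset.sum_nonneg fun i _ => Finset.sum_nonneg fun k _ => sq_nonneg _
lemma vecNorm_nonneg (x : ι → ℂ) : 0 ≤ vecNorm x := Real.sqrt_nonneg _
lemma vecNormSq_eq (x : ι → ℂ) : vecNormSq x = vecNorm x ^ 2 := by
  rw [vecNorm, Real.sq_sqrt (vecNormSq_nonneg x)]

lemma cs_sum {κ : Type*} [Fintype κ] (a b : κ → ℝ) (ha : ∀ j, 0 ≤ a j) (hb : ∀ j, 0 ≤ b j) :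
    ∑ j, a j * b j ≤ Real.sqrt (∑ j, a j ^ 2) * Real.sqrt (∑ j, b j ^ 2) := by
  have h := Finset.sum_mul_sq_le_sq_mul_sq Finset.univ a b
  have h1 : 0 ≤ ∑ j, a j * b j := Finset.sum_nonneg fun j _ => mul_nonneg (ha j) (hb j)
  calc ∑ j, a j * b j = Real.sqrt ((∑ j, a j * b j) ^ 2) := (Real.sqrt_sq h1).symm
    _ ≤ Real.sqrt ((∑ j, a j ^ 2) * (∑ j, b j ^ 2)) := Real.sqrt_le_sqrt h
    _ = _ := Real.sqrt_mul (Finset.sum_nonneg fun j _ => sq_nonneg _) _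

lemma toE_mulVec (M : Matrix ι ι ℂ) (y : ι → ℂ) :
    toE (M *ᵥ y) = Matrix.toEuclideanCLM (𝕜 := ℂ) M (toE y) := rfl

lemma vecNorm_mulVec_le (M : Matrix ι ι ℂ) (y : ι → ℂ) :
    vecNorm (M *ᵥ y) ≤ specNorm M * vecNorm y := by
  rw [vecNorm_eq, vecNorm_eq, toE_mulVec]
  exact (Matrix.toEuclideanCLM (𝕜 := ℂ) M).le_opNorm _

lemma specNorm_nonneg (M : Matrix ι ι ℂ) : 0 ≤ specNorm M := norm_nonneg _

lemma specNorm_le_frob (M : Matrix ι ι ℂ) : specNorm M ≤ Real.sqrt (frobNormSq M) := by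
  apply ContinuousLinearMap.opNorm_le_bound _ (Real.sqrt_nonneg _)
  intro y
  rw [EuclideanSpace.norm_eq, EuclideanSpace.norm_eq]
  rw [← Real.sqrt_mul (frobNormSq_nonneg M)]
  apply Real.sqrt_le_sqrt
  have key : ∀ i, ‖(Matrix.toEuclideanCLM (𝕜 := ℂ) M y) i‖ ^ 2
      ≤ (∑ k, ‖M i k‖ ^ 2) * ∑ k, ‖y k‖ ^ 2 := by
    intro i
    have e : (Matrix.toEuclideanCLM (𝕜 := ℂ) M y) i = ∑ k, M i k * y k := rfl
    rw [e]
    calc ‖∑ k, M i k * y k‖ ^ 2 ≤ (∑ k, ‖M i k‖ * ‖y k‖) ^ 2 := by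
          apply pow_le_pow_left₀ (norm_nonneg _)
          exact (norm_sum_le _ _).trans (le_of_eq (by simp [norm_mul]))
      _ ≤ _ := Finset.sum_mul_sq_le_sq_mul_sq Finset.univ _ _
  calc ∑ i, ‖(Matrix.toEuclideanCLM (𝕜 := ℂ) M y) i‖ ^ 2
      ≤ ∑ i, (∑ k, ‖M i k‖ ^ 2) * ∑ k, ‖y k‖ ^ 2 := Finset.sum_le_sum fun i _ => key i
    _ = frobNormSq M * ∑ k, ‖y k‖ ^ 2 := by rw [frobNormSq, Finset.sum_mul]

lemma vecMulVec_mulVec' (a b y : ι → ℂ) : vecMulVec a b *ᵥ y = (b ⬝ᵥ y) • a := by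
  ext i
  simp [vecMulVec, mulVec, dotProduct, Finset.mul_sum, mul_comm, mul_left_comm]

def flat (M : Matrix ι ι ℂ) : ι × ι → ℂ := fun p => M p.1 p.2

lemma frobNormSq_eq_flat (M : Matrix ι ι ℂ) : frobNormSq M = vecNormSq (flat M) := by
  rw [frobNormSq, vecNormSq, Fintype.sum_prod_type]; rfl

lemma flat_add (A B : Matrix ι ι ℂ) : flat (A + B) = flat A + flat B := rfl
lemma flat_smul (c : ℂ) (A : Matrix ι ι ℂ) : flat (c • A) = c • flat A := rfl

lemma vecNormSq_add (a b : ι → ℂ) :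
    vecNormSq (a + b) = vecNormSq a + vecNormSq b + 2 * (star a ⬝ᵥ b).re := by
  have h : ∀ i, ‖a i + b i‖ ^ 2 = ‖a i‖ ^ 2 + ‖b i‖ ^ 2 + 2 * (star (a i) * b i).re := by
    intro i
    have h2 := norm_add_sq (𝕜 := ℂ) (a i) (b i)
    rw [RCLike.inner_apply] at h2
    rw [h2, RCLike.re_to_complex]
    have : star (a i) * b i = (starRingEnd ℂ) (a i) * b i := rfl
    rw [this]; ring
  simp only [vecNormSq, Pi.add_apply, h, dotProduct, Pi.star_apply, Complex.re_sum]
  rw [Finset.sum_add_distrib, Finset.sum_add_distrib, ← Finset.mul_sum]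

lemma vecNormSq_smul (c : ℂ) (a : ι → ℂ) : vecNormSq (c • a) = ‖c‖ ^ 2 * vecNormSq a := by
  simp [vecNormSq, norm_smul, mul_pow, Finset.mul_sum]

lemma vecNormSq_star (a : ι → ℂ) : vecNormSq (star a) = vecNormSq a := by
  simp [vecNormSq]

lemma vecNormSq_neg (a : ι → ℂ) : vecNormSq (-a) = vecNormSq a := by
  simp [vecNormSq]

lemma vecNorm_neg (a : ι → ℂ) : vecNorm (-a) = vecNorm a := by
  rw [vecNorm, vecNorm, vecNormSq_neg]

lemma vecNorm_smul (c : ℂ) (a : ι → ℂ) : vecNorm (c • a) = ‖c‖ * vecNorm a := by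
  rw [vecNorm, vecNorm, vecNormSq_smul, Real.sqrt_mul (sq_nonneg _), Real.sqrt_sq (norm_nonneg c)]

lemma vecNorm_sum_le {κ : Type*} [Fintype κ] (f : κ → ι → ℂ) :
    vecNorm (∑ j, f j) ≤ ∑ j, vecNorm (f j) := by
  rw [vecNorm_eq, toE_sum]
  exact (norm_sum_le _ _).trans
    (le_of_eq (Finset.sum_congr rfl fun j _ => (vecNorm_eq _).symm))

lemma star_flat_dot (a b a' b' : ι → ℂ) :
    star (flat (vecMulVec a b)) ⬝ᵥ flat (vecMulVec a' b') = (star a ⬝ᵥ a') * (star b ⬝ᵥ b') := by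
  simp only [flat, vecMulVec, Matrix.of_apply, dotProduct, Pi.star_apply, Fintype.sum_prod_type,
    star_mul']
  rw [Finset.sum_mul_sum]
  exact Finset.sum_congr rfl fun i _ => Finset.sum_congr rfl fun k _ => by ring

lemma frobNormSq_vecMulVec' (a b : ι → ℂ) :
    frobNormSq (vecMulVec a b) = vecNormSq a * vecNormSq b := by
  simp only [frobNormSq, vecMulVec, Matrix.of_apply, norm_mul, mul_pow, vecNormSq,
    ← Finset.sum_mul, ← Finset.mul_sum]
  try rw [Finset.sum_comm]

lemma frobNormSq_smul (c : ℂ) (M : Matrix ι ι ℂ) :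
    frobNormSq (c • M) = ‖c‖ ^ 2 * frobNormSq M := by
  rw [frobNormSq_eq_flat, flat_smul, vecNormSq_smul, frobNormSq_eq_flat]

lemma star_dot_star (a b : ι → ℂ) : star a ⬝ᵥ star b = star (a ⬝ᵥ b) := by
  simp [dotProduct, star_sum]

lemma star_dot_self (w : ι → ℂ) : star w ⬝ᵥ w = ((vecNormSq w : ℝ) : ℂ) := by
  simp only [dotProduct, Pi.star_apply, vecNormSq]
  push_cast
  exact Finset.sum_congr rfl fun i _ => by
    rw [show (star (w i) : ℂ) = conj (w i) from rfl, mul_comm, Complex.mul_conj,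
      Complex.normSq_eq_norm_sq]
    norm_num

def rankTwo (w p : ι → ℂ) (ε μ : ℂ) : Matrix ι ι ℂ :=
  vecMulVec p (star w) + ε • vecMulVec (star w) p + μ • vecMulVec (star w) (star w)

lemma rankTwo_mulVec (w p : ι → ℂ) (ε μ : ℂ) (hwp : w ⬝ᵥ p = 0) :
    rankTwo w p ε μ *ᵥ w = ((vecNormSq w : ℝ) : ℂ) • p + (μ * (vecNormSq w : ℝ)) • star w := by
  simp only [rankTwo, Matrix.add_mulVec, Matrix.smul_mulVec, vecMulVec_mulVec',
    star_dot_self]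
  rw [show p ⬝ᵥ w = 0 from (dotProduct_comm p w).trans hwp]
  ext i
  simp [mul_comm, mul_assoc, mul_left_comm]

lemma rankTwo_frob (w p : ι → ℂ) (ε μ : ℂ) (hwp : w ⬝ᵥ p = 0) (hε : ‖ε‖ = 1) :
    frobNormSq (rankTwo w p ε μ)
      = 2 * (vecNormSq w * vecNormSq p) + ‖μ‖ ^ 2 * vecNormSq w ^ 2 := by
  have hpw : p ⬝ᵥ w = 0 := (dotProduct_comm p w).trans hwp
  have hsps : star p ⬝ᵥ star w = 0 := by rw [star_dot_star, hpw, star_zero]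
  have hssp : star (star w) ⬝ᵥ p = 0 := by rw [star_star, hwp]
  rw [rankTwo, frobNormSq_eq_flat, flat_add, flat_add, vecNormSq_add, vecNormSq_add]
  have c1 : star (flat (vecMulVec p (star w))) ⬝ᵥ flat (ε • vecMulVec (star w) p) = 0 := by
    rw [flat_smul, dotProduct_smul, star_flat_dot, hssp]; simp
  have c2 : star (flat (vecMulVec p (star w)) + flat (ε • vecMulVec (star w) p))
      ⬝ᵥ flat (μ • vecMulVec (star w) (star w)) = 0 := by
    rw [star_add, add_dotProduct, flat_smul, flat_smul, dotProduct_smul, star_smul,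
      smul_dotProduct, dotProduct_smul, star_flat_dot, star_flat_dot, hsps]
    simp
  rw [c1, c2, flat_smul, flat_smul, vecNormSq_smul, vecNormSq_smul,
    ← frobNormSq_eq_flat, ← frobNormSq_eq_flat, ← frobNormSq_eq_flat,
    frobNormSq_vecMulVec', frobNormSq_vecMulVec', frobNormSq_vecMulVec',
    vecNormSq_star, hε]
  simp only [Complex.zero_re, mul_zero, zero_mul, add_zero]
  ring

lemma rankTwo_transpose_sym (w p : ι → ℂ) (μ : ℂ) :
    (rankTwo w p 1 μ)ᵀ = rankTwo w p 1 μ := by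
  ext i k
  simp [rankTwo, vecMulVec, Matrix.transpose_apply]
  ring

lemma rankTwo_transpose_skew (w p : ι → ℂ) :
    (rankTwo w p (-1) 0)ᵀ = -(rankTwo w p (-1) 0) := by
  ext i k
  simp [rankTwo, vecMulVec, Matrix.transpose_apply]
  ring

end Aux

section Scalars


lemma geomA_ge_one {m : ℕ} (hm : 1 ≤ m) {t : ℝ} (ht : 0 ≤ t) :
    1 ≤ ∑ j ∈ Finset.range m, t ^ j := by
  have : (1:ℝ) = ∑ j ∈ Finset.range 1, t ^ j := by simp
  rw [this]
  exact Finset.sum_le_sum_of_subset_of_nonneg (Finset.range_subset_range.2 hm)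
    (fun j _ _ => pow_nonneg ht j)

lemma geomA_nonneg {m : ℕ} {t : ℝ} (ht : 0 ≤ t) : 0 ≤ ∑ j ∈ Finset.range m, t ^ j :=
  Finset.sum_nonneg fun j _ => pow_nonneg ht j

lemma geom_shift {m : ℕ} (t : ℝ) :
    (1 + t) * ∑ j ∈ Finset.range m, t ^ j
      = 2 * (∑ j ∈ Finset.range m, t ^ j) + t ^ m - 1 := by
  have h1 : ∑ j ∈ Finset.range m, t ^ (j+1)
      = (∑ j ∈ Finset.range m, t ^ j) + t ^ m - 1 := by
    have := Finset.sum_range_succ' (fun j => t ^ j) m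
    have h2 := Finset.sum_range_succ (fun j => t ^ j) m
    rw [h2] at this
    simp only [pow_zero] at this
    linarith
  have : t * ∑ j ∈ Finset.range m, t ^ j = ∑ j ∈ Finset.range m, t ^ (j+1) := by
    rw [Finset.mul_sum]; exact Finset.sum_congr rfl fun j _ => by ring
  nlinarith [this, h1]

lemma ico_reflect {m : ℕ} (t : ℝ) :
    ∑ j ∈ Finset.Ico 1 m, t ^ (m - j) = ∑ j ∈ Finset.Ico 1 m, t ^ j := by
  apply Finset.sum_nbij' (i := fun j => m - j) (j := fun j => m - j)
  all_goals intros; simp_all [Finset.mem_Ico]; try omega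

lemma twoa_le {m : ℕ} (hm : 1 ≤ m) {t : ℝ} (ht : 0 ≤ t) :
    2 * (∑ j ∈ Finset.Ico 1 m, t ^ j) ≤ ((m:ℝ) - 1) * (1 + t ^ m) := by
  have key : 0 ≤ ∑ j ∈ Finset.Ico 1 m, (1 - t ^ j) * (1 - t ^ (m - j)) := by
    apply Finset.sum_nonneg
    intro j hj
    rw [Finset.mem_Ico] at hj
    rcases le_total t 1 with h | h
    · have h1 : t ^ j ≤ 1 := pow_le_one₀ ht h
      have h2 : t ^ (m - j) ≤ 1 := pow_le_one₀ ht h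
      nlinarith
    · have h1 : 1 ≤ t ^ j := one_le_pow₀ h
      have h2 : 1 ≤ t ^ (m - j) := one_le_pow₀ h
      nlinarith
  have expand : ∑ j ∈ Finset.Ico 1 m, (1 - t ^ j) * (1 - t ^ (m - j))
      = ((m:ℝ) - 1) * (1 + t ^ m) - 2 * ∑ j ∈ Finset.Ico 1 m, t ^ j := by
    have card : (Finset.Ico 1 m).card = m - 1 := Nat.card_Ico 1 m
    have e1 : ∀ j ∈ Finset.Ico 1 m, (1 - t ^ j) * (1 - t ^ (m - j))
        = (1 + t ^ m) - t ^ j - t ^ (m - j) := by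
      intro j hj
      rw [Finset.mem_Ico] at hj
      have : t ^ j * t ^ (m - j) = t ^ m := by
        rw [← pow_add]; congr 1; omega
      nlinarith [this]
    rw [Finset.sum_congr rfl e1]
    simp only [Finset.sum_sub_distrib, Finset.sum_const, card, nsmul_eq_mul, ico_reflect]
    have : ((m - 1 : ℕ) : ℝ) = (m : ℝ) - 1 := by
      have := Nat.cast_sub hm (R := ℝ); simpa using this
    rw [this]; ring
  linarith [key, expand.symm.le]

lemma a_eq {m : ℕ} (hm : 1 ≤ m) (t : ℝ) :
    ∑ j ∈ Finset.range m, t ^ j = 1 + ∑ j ∈ Finset.Ico 1 m, t ^ j := by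
  obtain ⟨k, rfl⟩ : ∃ k, m = k + 1 := ⟨m - 1, by omega⟩
  rw [Finset.sum_range_succ' (fun j => t ^ j) k, Finset.sum_Ico_eq_sum_range]
  simp only [pow_zero, add_comm]
  try congr 1
  try exact Finset.sum_congr (by omega) fun j _ => by ring_nf

lemma key_lower {m : ℕ} (hm : 1 ≤ m) {t : ℝ} (ht : 0 ≤ t) :
    ((m:ℝ) + 1) * ((1 + t) * ∑ j ∈ Finset.range m, t ^ j)
      ≤ 2 * m * ∑ j ∈ Finset.range (m+1), t ^ j := by
  rw [geom_shift, Finset.sum_range_succ]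
  have h1 := twoa_le hm ht
  have h2 := a_eq hm t
  have hm1 : (1:ℝ) ≤ m := by exact_mod_cast hm
  nlinarith [geomA_nonneg (m := m) ht, pow_nonneg ht m]

lemma S_le_onet {m : ℕ} (hm : 1 ≤ m) {t : ℝ} (ht : 0 ≤ t) :
    ∑ j ∈ Finset.range (m+1), t ^ j ≤ (1 + t) * ∑ j ∈ Finset.range m, t ^ j := by
  rw [geom_shift, Finset.sum_range_succ]
  linarith [geomA_ge_one hm ht]

lemma S_le_two {m : ℕ} (hm : 1 ≤ m) {t : ℝ} (ht : 0 ≤ t) (ht1 : t ≤ 1) :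
    ∑ j ∈ Finset.range (m+1), t ^ j ≤ 2 * ∑ j ∈ Finset.range m, t ^ j := by
  rw [Finset.sum_range_succ]
  have : t ^ m ≤ 1 := pow_le_one₀ ht ht1
  linarith [geomA_ge_one hm ht]

lemma S_le_twot {m : ℕ} (hm : 1 ≤ m) {t : ℝ} (ht1 : 1 ≤ t) :
    ∑ j ∈ Finset.range (m+1), t ^ j ≤ 2 * t * ∑ j ∈ Finset.range m, t ^ j := by
  have ht : (0:ℝ) ≤ t := by linarith
  have e : t * ∑ j ∈ Finset.range m, t ^ j = (∑ j ∈ Finset.range m, t ^ j) + t ^ m - 1 := by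
    have := geom_shift (m := m) t
    nlinarith [this]
  rw [Finset.sum_range_succ]
  have h1 : 1 ≤ t ^ m := one_le_pow₀ ht1
  nlinarith [geomA_ge_one hm ht, e]

end Scalars


section Mid
set_option linter.unusedSectionVars false
set_option linter.unusedVariables false

lemma sum_mulVec' {κ : Type*} (s : Finset κ) (f : κ → Matrix ι ι ℂ) (y : ι → ℂ) :
    (∑ j ∈ s, f j) *ᵥ y = ∑ j ∈ s, f j *ᵥ y := by
  induction s using Finset.cons_induction with
  | empty => simp [Matrix.zero_mulVec]
  | cons a s ha ih => rw [Finset.sum_cons, Finset.sum_cons, Matrix.add_mulVec, ih]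

lemma eval_bound {m : ℕ} (D : Fin (m+1) → Matrix ι ι ℂ) (z : ℂ) (y : ι → ℂ) :
    vecNorm (polyEval D z *ᵥ y) ≤ Real.sqrt (lamNormSq m z) * (polyNorm2 D * vecNorm y) := by
  have e : polyEval D z *ᵥ y = ∑ j : Fin (m+1), z ^ (j:ℕ) • (D j *ᵥ y) := by
    rw [polyEval, sum_mulVec']
    exact Finset.sum_congr rfl fun j _ => Matrix.smul_mulVec _ _ _
  rw [e]
  calc vecNorm (∑ j : Fin (m+1), z ^ (j:ℕ) • (D j *ᵥ y))
      ≤ ∑ j : Fin (m+1), vecNorm (z ^ (j:ℕ) • (D j *ᵥ y)) := vecNorm_sum_le _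
    _ = ∑ j : Fin (m+1), ‖z ^ (j:ℕ)‖ * vecNorm (D j *ᵥ y) :=
        Finset.sum_congr rfl fun j _ => vecNorm_smul _ _
    _ ≤ ∑ j : Fin (m+1), ‖z ^ (j:ℕ)‖ * (specNorm (D j) * vecNorm y) :=
        Finset.sum_le_sum fun j _ =>
          mul_le_mul_of_nonneg_left (vecNorm_mulVec_le _ _) (norm_nonneg _)
    _ = (∑ j : Fin (m+1), ‖z ^ (j:ℕ)‖ * specNorm (D j)) * vecNorm y := by
        rw [Finset.sum_mul]; exact Finset.sum_congr rfl fun j _ => by ring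
    _ ≤ (Real.sqrt (∑ j : Fin (m+1), ‖z ^ (j:ℕ)‖ ^ 2)
          * Real.sqrt (∑ j : Fin (m+1), specNorm (D j) ^ 2)) * vecNorm y := by
        apply mul_le_mul_of_nonneg_right _ (vecNorm_nonneg _)
        exact cs_sum _ _ (fun j => norm_nonneg _) (fun j => specNorm_nonneg _)
    _ = Real.sqrt (lamNormSq m z) * (polyNorm2 D * vecNorm y) := by
        rw [lamNormSq, polyNorm2, mul_assoc]

lemma lamNormSq_eq (m : ℕ) (z : ℂ) :
    lamNormSq m z = ∑ j ∈ Finset.range (m+1), (‖z‖ ^ 2) ^ j := by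
  rw [lamNormSq, ← Fin.sum_univ_eq_sum_range (fun j => (‖z‖ ^ 2) ^ j) (m+1)]
  exact Finset.sum_congr rfl fun j _ => by rw [norm_pow, ← pow_mul, ← pow_mul, mul_comm]

lemma lamNormSq_ge_one (m : ℕ) (z : ℂ) : 1 ≤ lamNormSq m z := by
  rw [lamNormSq_eq]
  exact geomA_ge_one (by omega) (sq_nonneg _)

lemma lamNormSq_pos (m : ℕ) (z : ℂ) : 0 < lamNormSq m z :=
  lt_of_lt_of_le one_pos (lamNormSq_ge_one m z)

lemma lamNormSq_one_eq (z : ℂ) : lamNormSq 1 z = 1 + ‖z‖ ^ 2 := by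
  rw [lamNormSq, Fin.sum_univ_two]
  norm_num

lemma kron_vecNormSq {m' n' : ℕ} (v : Fin m' → ℂ) (x : Fin n' → ℂ) :
    vecNormSq (kronVec v x) = vecNormSq v * vecNormSq x := by
  simp only [vecNormSq, kronVec, norm_mul, mul_pow, Fintype.sum_prod_type,
    ← Finset.mul_sum, ← Finset.sum_mul]

lemma vecNormSq_lamVec (m : ℕ) (z : ℂ) :
    vecNormSq (lamVec m z) = ∑ j ∈ Finset.range m, (‖z‖ ^ 2) ^ j := by
  rw [vecNormSq, ← Finset.sum_range_reflect (fun j => (‖z‖ ^ 2) ^ j) m,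
    ← Fin.sum_univ_eq_sum_range (fun j => (‖z‖ ^ 2) ^ (m - 1 - j)) m]
  exact Finset.sum_congr rfl fun j _ => by
    rw [lamVec, norm_pow, ← pow_mul, ← pow_mul, mul_comm]

lemma polyNorm2_le_polyNormF {m : ℕ} (D : Fin (m+1) → Matrix ι ι ℂ) :
    polyNorm2 D ≤ polyNormF D := by
  apply Real.sqrt_le_sqrt
  apply Finset.sum_le_sum
  intro j _
  have h := specNorm_le_frob (D j)
  calc specNorm (D j) ^ 2 ≤ Real.sqrt (frobNormSq (D j)) ^ 2 :=
        pow_le_pow_left₀ (specNorm_nonneg _) h 2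
    _ = frobNormSq (D j) := Real.sq_sqrt (frobNormSq_nonneg _)

lemma polyNormF_nonneg {m : ℕ} (D : Fin (m+1) → Matrix ι ι ℂ) : 0 ≤ polyNormF D :=
  Real.sqrt_nonneg _
lemma polyNorm2_nonneg {m : ℕ} (D : Fin (m+1) → Matrix ι ι ℂ) : 0 ≤ polyNorm2 D :=
  Real.sqrt_nonneg _

lemma eta_le_of_elem {m : ℕ} (N : (Fin (m+1) → Matrix ι ι ℂ) → ℝ)
    (S : Set (Fin (m+1) → Matrix ι ι ℂ)) (lam : ℂ) (x : ι → ℂ)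
    (A : Fin (m+1) → Matrix ι ι ℂ) (K : ℝ)
    (hN0 : ∀ D, 0 ≤ N D)
    (helem : ∃ ΔA ∈ S, (polyEval A lam + polyEval ΔA lam) *ᵥ x = 0 ∧ N ΔA ≤ K) :
    eta N S lam x A ≤ K := by
  obtain ⟨D, hD, hcond, hK⟩ := helem
  refine le_trans (csInf_le ⟨0, ?_⟩ ⟨D, hD, hcond, rfl⟩) hK
  rintro t ⟨D', _, _, rfl⟩
  exact hN0 D'

lemma le_eta_of_forall {m : ℕ} (N : (Fin (m+1) → Matrix ι ι ℂ) → ℝ)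
    (S : Set (Fin (m+1) → Matrix ι ι ℂ)) (lam : ℂ) (x : ι → ℂ)
    (A : Fin (m+1) → Matrix ι ι ℂ) (K : ℝ)
    (hne : ∃ ΔA ∈ S, (polyEval A lam + polyEval ΔA lam) *ᵥ x = 0)
    (hall : ∀ ΔA ∈ S, (polyEval A lam + polyEval ΔA lam) *ᵥ x = 0 → K ≤ N ΔA) :
    K ≤ eta N S lam x A := by
  apply le_csInf
  · obtain ⟨D, hD, hc⟩ := hne
    exact ⟨N D, D, hD, hc, rfl⟩
  · rintro t ⟨D, hD, hc, rfl⟩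
    exact hall D hD hc

lemma univ_elem_ge {m : ℕ} (lam : ℂ) (x : ι → ℂ) (hx : vecNormSq x = 1)
    (A ΔA : Fin (m+1) → Matrix ι ι ℂ)
    (h : (polyEval A lam + polyEval ΔA lam) *ᵥ x = 0) :
    vecNorm (polyEval A lam *ᵥ x) / Real.sqrt (lamNormSq m lam) ≤ polyNorm2 ΔA := by
  have hx' : vecNorm x = 1 := by rw [vecNorm, hx, Real.sqrt_one]
  have e : polyEval ΔA lam *ᵥ x = -(polyEval A lam *ᵥ x) := by
    rw [Matrix.add_mulVec] at h
    exact eq_neg_of_add_eq_zero_right h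
  have hb := eval_bound ΔA lam x
  rw [e, vecNorm_neg, hx', mul_one] at hb
  rw [div_le_iff₀ (Real.sqrt_pos.2 (lamNormSq_pos m lam))]
  linarith [hb]

lemma star_dot_x_one (x : ι → ℂ) (hx : star x ⬝ᵥ x = 1) : vecNormSq x = 1 := by
  have h := star_dot_self x
  rw [hx] at h
  exact_mod_cast h.symm

lemma univ_construct {m : ℕ} (lam : ℂ) (x : ι → ℂ) (hx : star x ⬝ᵥ x = 1)
    (A : Fin (m+1) → Matrix ι ι ℂ) :
    ∃ ΔA : Fin (m+1) → Matrix ι ι ℂ,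
      (polyEval A lam + polyEval ΔA lam) *ᵥ x = 0 ∧
      polyNormF ΔA = vecNorm (polyEval A lam *ᵥ x) / Real.sqrt (lamNormSq m lam) := by
  have hx1 : vecNormSq x = 1 := star_dot_x_one x hx
  set S : ℝ := lamNormSq m lam with hSdef
  have hS0 : 0 < S := lamNormSq_pos m lam
  have hSC : ((S:ℝ):ℂ) ≠ 0 := by exact_mod_cast ne_of_gt hS0
  set r : ι → ℂ := polyEval A lam *ᵥ x with hrdef
  refine ⟨fun j => (-(conj (lam ^ (j:ℕ))) / (S:ℂ)) • vecMulVec r (star x), ?_, ?_⟩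
  · have key : polyEval (fun j : Fin (m+1) =>
        (-(conj (lam ^ (j:ℕ))) / (S:ℂ)) • vecMulVec r (star x)) lam
        = (-1 : ℂ) • vecMulVec r (star x) := by
      rw [polyEval]
      have e1 : ∀ j : Fin (m+1), lam ^ (j:ℕ) • ((-(conj (lam ^ (j:ℕ))) / (S:ℂ)) • vecMulVec r (star x))
          = (lam ^ (j:ℕ) * (-(conj (lam ^ (j:ℕ))) / (S:ℂ))) • vecMulVec r (star x) := fun j =>
        (smul_smul _ _ _)
      rw [Finset.sum_congr rfl fun j _ => e1 j, ← Finset.sum_smul]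
      congr 1
      have e2 : ∀ j : Fin (m+1), lam ^ (j:ℕ) * (-(conj (lam ^ (j:ℕ))) / (S:ℂ))
          = -(((‖lam ^ (j:ℕ)‖ ^ 2 : ℝ) : ℂ)) / (S:ℂ) := by
        intro j
        rw [show lam ^ (j:ℕ) * (-(conj (lam ^ (j:ℕ))) / (S:ℂ))
            = -(lam ^ (j:ℕ) * conj (lam ^ (j:ℕ))) / (S:ℂ) by ring,
          Complex.mul_conj, Complex.normSq_eq_norm_sq]
      rw [Finset.sum_congr rfl fun j _ => e2 j]
      rw [show (∑ j : Fin (m+1), -(((‖lam ^ (j:ℕ)‖ ^ 2 : ℝ) : ℂ)) / (S:ℂ))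
          = -((∑ j : Fin (m+1), ((‖lam ^ (j:ℕ)‖ ^ 2 : ℝ) : ℂ)) / (S:ℂ)) by
        rw [← Finset.sum_div, Finset.sum_neg_distrib, neg_div]]
      rw [show ∑ j : Fin (m+1), ((‖lam ^ (j:ℕ)‖ ^ 2 : ℝ) : ℂ) = ((S : ℝ) : ℂ) by
        rw [hSdef, lamNormSq]; push_cast; rfl]
      rw [div_self hSC]
    rw [Matrix.add_mulVec, key, Matrix.smul_mulVec, vecMulVec_mulVec', hx]
    simp
    exact add_neg_cancel _
  · rw [polyNormF]
    have e3 : ∀ j : Fin (m+1),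
        frobNormSq ((-(conj (lam ^ (j:ℕ))) / (S:ℂ)) • vecMulVec r (star x))
        = ‖lam ^ (j:ℕ)‖ ^ 2 / S ^ 2 * vecNormSq r := by
      intro j
      rw [frobNormSq_smul, frobNormSq_vecMulVec', vecNormSq_star, hx1, mul_one]
      congr 1
      rw [norm_div, norm_neg, RCLike.norm_conj]
      rw [div_pow]
      congr 1
      rw [Complex.norm_real, Real.norm_eq_abs, abs_of_pos hS0]
    rw [Finset.sum_congr rfl fun j _ => e3 j]
    rw [← Finset.sum_mul, ← Finset.sum_div]
    rw [show (∑ j : Fin (m+1), ‖lam ^ (j:ℕ)‖ ^ 2) = S from rfl]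
    rw [vecNormSq_eq]
    rw [show S / S ^ 2 * vecNorm r ^ 2 = vecNorm r ^ 2 / S by field_simp]
    rw [Real.sqrt_div (sq_nonneg _), Real.sqrt_sq (vecNorm_nonneg r)]

end Mid


section Constructions
set_option linter.unusedSectionVars false
set_option linter.unusedVariables false
set_option maxHeartbeats 1000000

lemma pencil_elem_ge (lam : ℂ) (B ΔB : Fin (1+1) → Matrix ι ι ℂ) (w : ι → ℂ)
    (hw : 0 < vecNormSq w)
    (h : (polyEval B lam + polyEval ΔB lam) *ᵥ w = 0) :
    vecNorm (polyEval B lam *ᵥ w) / Real.sqrt ((1 + ‖lam‖^2) * vecNormSq w)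
      ≤ polyNorm2 ΔB := by
  have e : polyEval ΔB lam *ᵥ w = -(polyEval B lam *ᵥ w) := by
    rw [Matrix.add_mulVec] at h
    exact eq_neg_of_add_eq_zero_right h
  have hb := eval_bound ΔB lam w
  rw [e, vecNorm_neg, lamNormSq_one_eq] at hb
  have hpos : (0:ℝ) < (1 + ‖lam‖^2) * vecNormSq w := mul_pos (by positivity) hw
  rw [div_le_iff₀ (Real.sqrt_pos.2 hpos)]
  have hsq : Real.sqrt ((1 + ‖lam‖^2) * vecNormSq w)
      = Real.sqrt (1 + ‖lam‖^2) * vecNorm w := by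
    rw [Real.sqrt_mul (by positivity), vecNorm]
  rw [hsq, show polyNorm2 ΔB * (Real.sqrt (1 + ‖lam‖^2) * vecNorm w)
      = Real.sqrt (1 + ‖lam‖^2) * (polyNorm2 ΔB * vecNorm w) by ring]
  exact hb

lemma lower_glue {m : ℕ} (hm : 1 ≤ m) (tt R : ℝ) (ht : 0 ≤ tt) (hR : 0 ≤ R) :
    Real.sqrt (((m:ℝ)+1)/(2*m)) * (R / Real.sqrt (∑ j ∈ Finset.range (m+1), tt^j))
      ≤ R / Real.sqrt ((1+tt) * ∑ j ∈ Finset.range m, tt^j) := by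
  have hm' : (1:ℝ) ≤ m := by exact_mod_cast hm
  have hS1 : (1:ℝ) ≤ ∑ j ∈ Finset.range (m+1), tt^j := geomA_ge_one (by omega) ht
  have hs1 : (1:ℝ) ≤ ∑ j ∈ Finset.range m, tt^j := geomA_ge_one hm ht
  have hW : (0:ℝ) < (1+tt) * ∑ j ∈ Finset.range m, tt^j := by nlinarith
  have hS0 : (0:ℝ) < ∑ j ∈ Finset.range (m+1), tt^j := by linarith
  have key := key_lower hm ht
  rw [show R / Real.sqrt (∑ j ∈ Finset.range (m+1), tt^j)
      = Real.sqrt (R^2 / ∑ j ∈ Finset.range (m+1), tt^j) by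
    rw [Real.sqrt_div (sq_nonneg R), Real.sqrt_sq hR]]
  rw [show R / Real.sqrt ((1+tt) * ∑ j ∈ Finset.range m, tt^j)
      = Real.sqrt (R^2 / ((1+tt) * ∑ j ∈ Finset.range m, tt^j)) by
    rw [Real.sqrt_div (sq_nonneg R), Real.sqrt_sq hR]]
  rw [← Real.sqrt_mul (by positivity)]
  apply Real.sqrt_le_sqrt
  rw [div_mul_div_comm, div_le_div_iff₀ (by positivity) hW]
  nlinarith [mul_le_mul_of_nonneg_right key (sq_nonneg R)]

lemma even_construct (lam : ℂ) (B : Fin (1+1) → Matrix ι ι ℂ) (w g : ι → ℂ)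
    (hw : 0 < vecNormSq w) (hLw : polyEval B lam *ᵥ w = g)
    (X : ℝ) (hX : 0 < X) (hX1 : X ≤ (1 + ‖lam‖^2) * vecNormSq w)
    (hX2 : X ≤ 2 * vecNormSq w) :
    ∃ ΔB ∈ (TevenPoly : Set (Fin (1+1) → Matrix ι ι ℂ)),
      (polyEval B lam + polyEval ΔB lam) *ᵥ w = 0 ∧
      polyNormF ΔB ^ 2 ≤ 2 * vecNormSq g / X := by
  classical
  set s : ℝ := vecNormSq w with hsdef
  set tt : ℝ := ‖lam‖^2 with httdef
  have htt : (0:ℝ) ≤ tt := sq_nonneg _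
  have hsC : ((s:ℝ):ℂ) ≠ 0 := by exact_mod_cast ne_of_gt hw
  set u : ι → ℂ := -g with hudef
  set β : ℂ := (w ⬝ᵥ u) / ((s:ℝ):ℂ) with hβdef
  set p : ι → ℂ := u - β • star w with hpdef
  have hwsw : w ⬝ᵥ star w = ((s:ℝ):ℂ) := by rw [dotProduct_comm]; exact star_dot_self w
  have hwp : w ⬝ᵥ p = 0 := by
    rw [hpdef, dotProduct_sub, dotProduct_smul, hwsw, hβdef, smul_eq_mul]
    field_simp
    ring
  have hup : u = p + β • star w := by rw [hpdef]; abel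
  set T : ℂ := ((1+tt : ℝ):ℂ) with hTdef
  have h1tt : (0:ℝ) < 1 + tt := by linarith
  have hTC : T ≠ 0 := by rw [hTdef]; exact_mod_cast ne_of_gt h1tt
  have hmc : lam * conj lam = ((tt:ℝ):ℂ) := by
    rw [Complex.mul_conj, Complex.normSq_eq_norm_sq, httdef]
  have hT2 : T = 1 + lam * conj lam := by rw [hmc, hTdef]; push_cast; ring
  have hT2C : (1 : ℂ) + lam * conj lam ≠ 0 := hT2 ▸ hTC
  set ΔY := (1/(((s:ℝ):ℂ)*T)) • rankTwo w p 1 (T*β) with hYdef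
  set ΔX := ((conj lam)/(((s:ℝ):ℂ)*T)) • rankTwo w p (-1) 0 with hXdef
  refine ⟨![ΔY, ΔX], ?_, ?_, ?_⟩
  · intro j
    match j with
    | 0 =>
      refine ⟨fun _ => ?_, fun h => absurd (by norm_num : Even (((0 : Fin (1+1)) : ℕ))) h⟩
      show (![ΔY, ΔX] 0)ᵀ = ![ΔY, ΔX] 0
      rw [Matrix.cons_val_zero, hYdef, Matrix.transpose_smul, rankTwo_transpose_sym]
    | 1 =>
      refine ⟨fun h => absurd h (by norm_num), fun _ => ?_⟩
      show (![ΔY, ΔX] 1)ᵀ = -(![ΔY, ΔX] 1)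
      rw [Matrix.cons_val_one, Matrix.cons_val_zero, hXdef, Matrix.transpose_smul,
        rankTwo_transpose_skew, smul_neg]
  · have h2 : polyEval ![ΔY, ΔX] lam = ΔY + lam • ΔX := by
      rw [polyEval, Fin.sum_univ_two]
      simp
    have heval : polyEval ![ΔY, ΔX] lam *ᵥ w = u := by
      rw [h2, Matrix.add_mulVec, hYdef, hXdef]
      simp only [Matrix.smul_mulVec]
      rw [rankTwo_mulVec _ _ _ _ hwp, rankTwo_mulVec _ _ _ _ hwp, hup, hT2]
      simp only [← hsdef]
      ext i
      simp only [Pi.add_apply, Pi.smul_apply, smul_eq_mul, Pi.star_apply]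
      field_simp
      ring
    rw [Matrix.add_mulVec, hLw, heval, hudef]
    simp
  · have hsum0 : (0:ℝ) ≤ ∑ j : Fin (1+1), frobNormSq (![ΔY, ΔX] j) :=
      Finset.sum_nonneg fun j _ => frobNormSq_nonneg _
    have hn0 : polyNormF ![ΔY, ΔX] ^ 2 = frobNormSq ΔY + frobNormSq ΔX := by
      rw [polyNormF, Real.sq_sqrt hsum0, Fin.sum_univ_two]
      simp
    have hm1 : ‖(-1 : ℂ)‖ = 1 := by norm_num
    have hfY : frobNormSq ΔY
        = 1/(s*(1+tt))^2 * (2 * (s * vecNormSq p) + (1+tt)^2*‖β‖^2 * s^2) := by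
      rw [hYdef, frobNormSq_smul, rankTwo_frob _ _ _ _ hwp norm_one]
      simp only [← hsdef]
      have e1 : ‖1/(((s:ℝ):ℂ)*T)‖^2 = 1/(s*(1+tt))^2 := by
        rw [hTdef, show ((s:ℝ):ℂ)*((1+tt:ℝ):ℂ) = (((s*(1+tt)):ℝ):ℂ) by push_cast; ring,
          norm_div, norm_one, Complex.norm_real, Real.norm_eq_abs,
          abs_of_pos (by positivity), div_pow, one_pow]
      have e2 : ‖T*β‖^2 = (1+tt)^2*‖β‖^2 := by
        rw [norm_mul, mul_pow, hTdef, Complex.norm_real, Real.norm_eq_abs, abs_of_pos h1tt]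
      rw [e1, e2]
      try ring
    have hfX : frobNormSq ΔX = tt/(s*(1+tt))^2 * (2 * (s * vecNormSq p)) := by
      rw [hXdef, frobNormSq_smul, rankTwo_frob _ _ _ _ hwp hm1]
      simp only [← hsdef]
      have e1 : ‖(conj lam)/(((s:ℝ):ℂ)*T)‖^2 = tt/(s*(1+tt))^2 := by
        rw [hTdef, show ((s:ℝ):ℂ)*((1+tt:ℝ):ℂ) = (((s*(1+tt)):ℝ):ℂ) by push_cast; ring,
          norm_div, Complex.norm_real, Real.norm_eq_abs, abs_of_pos (by positivity),
          RCLike.norm_conj, div_pow, ← httdef]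
      rw [e1, norm_zero]
      try ring
    have hcross : star p ⬝ᵥ (β • star w) = 0 := by
      rw [dotProduct_smul, star_dot_star, (dotProduct_comm p w).trans hwp, star_zero,
        smul_zero]
    have hdecomp : vecNormSq u = vecNormSq p + ‖β‖^2 * s := by
      rw [hup, vecNormSq_add, vecNormSq_smul, vecNormSq_star, hcross]
      simp [hsdef]
    have hgu : vecNormSq g = vecNormSq u := by rw [hudef, vecNormSq_neg]
    rw [hn0, hfY, hfX, hgu, hdecomp]
    have hP0 : 0 ≤ vecNormSq p := vecNormSq_nonneg p
    have hb0 : (0:ℝ) ≤ ‖β‖^2 := sq_nonneg _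
    have lhs_eq : 1/(s*(1+tt))^2 * (2 * (s * vecNormSq p) + (1+tt)^2*‖β‖^2 * s^2)
        + tt/(s*(1+tt))^2 * (2 * (s * vecNormSq p))
        = 2 * vecNormSq p/(s*(1+tt)) + ‖β‖^2 := by
      field_simp
      ring
    rw [lhs_eq]
    have h1 : 2 * vecNormSq p/(s*(1+tt)) ≤ 2 * vecNormSq p/X := by
      apply div_le_div_of_nonneg_left (by positivity) hX
      calc X ≤ (1 + tt) * s := hX1
        _ = s * (1+tt) := by ring
    have h2 : ‖β‖^2 ≤ 2*‖β‖^2*s/X := by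
      rw [le_div_iff₀ hX]
      nlinarith
    calc 2 * vecNormSq p/(s*(1+tt)) + ‖β‖^2
        ≤ 2 * vecNormSq p/X + 2*‖β‖^2*s/X := add_le_add h1 h2
      _ = 2 * (vecNormSq p + ‖β‖^2 * s)/X := by ring

lemma odd_construct (lam : ℂ) (hlam : 1 ≤ ‖lam‖)
    (B : Fin (1+1) → Matrix ι ι ℂ) (w g : ι → ℂ)
    (hw : 0 < vecNormSq w) (hLw : polyEval B lam *ᵥ w = g)
    (X : ℝ) (hX : 0 < X) (hX1 : X ≤ (1 + ‖lam‖^2) * vecNormSq w)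
    (hX2 : X ≤ 2 * ‖lam‖^2 * vecNormSq w) :
    ∃ ΔB ∈ (ToddPoly : Set (Fin (1+1) → Matrix ι ι ℂ)),
      (polyEval B lam + polyEval ΔB lam) *ᵥ w = 0 ∧
      polyNormF ΔB ^ 2 ≤ 2 * vecNormSq g / X := by
  classical
  have hlam0 : lam ≠ 0 := norm_pos_iff.mp (lt_of_lt_of_le one_pos hlam)
  have hcl : conj lam ≠ 0 := fun h => hlam0 (by simpa using congrArg (starRingEnd ℂ) h)
  set s : ℝ := vecNormSq w with hsdef
  set tt : ℝ := ‖lam‖^2 with httdef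
  have htt : (0:ℝ) ≤ tt := sq_nonneg _
  have httpos : (0:ℝ) < tt := by
    rw [httdef]; positivity
  have httC : ((tt:ℝ):ℂ) ≠ 0 := by exact_mod_cast ne_of_gt httpos
  have htt1 : (1:ℝ) ≤ tt := by
    rw [httdef]; nlinarith
  have hsC : ((s:ℝ):ℂ) ≠ 0 := by exact_mod_cast ne_of_gt hw
  set u : ι → ℂ := -g with hudef
  set β : ℂ := (w ⬝ᵥ u) / ((s:ℝ):ℂ) with hβdef
  set p : ι → ℂ := u - β • star w with hpdef
  have hwsw : w ⬝ᵥ star w = ((s:ℝ):ℂ) := by rw [dotProduct_comm]; exact star_dot_self w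
  have hwp : w ⬝ᵥ p = 0 := by
    rw [hpdef, dotProduct_sub, dotProduct_smul, hwsw, hβdef, smul_eq_mul]
    field_simp
    ring
  have hup : u = p + β • star w := by rw [hpdef]; abel
  set T : ℂ := ((1+tt : ℝ):ℂ) with hTdef
  have h1tt : (0:ℝ) < 1 + tt := by linarith
  have hTC : T ≠ 0 := by rw [hTdef]; exact_mod_cast ne_of_gt h1tt
  have hmc : lam * conj lam = ((tt:ℝ):ℂ) := by
    rw [Complex.mul_conj, Complex.normSq_eq_norm_sq, httdef]
  have hT2 : T = 1 + lam * conj lam := by rw [hmc, hTdef]; push_cast; ring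
  have hT2C : (1 : ℂ) + lam * conj lam ≠ 0 := hT2 ▸ hTC
  set μ' : ℂ := T*β/((tt:ℝ):ℂ) with hμdef
  set ΔY := (1/(((s:ℝ):ℂ)*T)) • rankTwo w p (-1) 0 with hYdef
  set ΔX := ((conj lam)/(((s:ℝ):ℂ)*T)) • rankTwo w p 1 μ' with hXdef
  refine ⟨![ΔY, ΔX], ?_, ?_, ?_⟩
  · intro j
    match j with
    | 0 =>
      refine ⟨fun _ => ?_, fun h => absurd (by norm_num : Even (((0 : Fin (1+1)) : ℕ))) h⟩
      show (![ΔY, ΔX] 0)ᵀ = -(![ΔY, ΔX] 0)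
      rw [Matrix.cons_val_zero, hYdef, Matrix.transpose_smul, rankTwo_transpose_skew,
        smul_neg]
    | 1 =>
      refine ⟨fun h => absurd h (by norm_num), fun _ => ?_⟩
      show (![ΔY, ΔX] 1)ᵀ = ![ΔY, ΔX] 1
      rw [Matrix.cons_val_one, Matrix.cons_val_zero, hXdef, Matrix.transpose_smul,
        rankTwo_transpose_sym]
  · have h2 : polyEval ![ΔY, ΔX] lam = ΔY + lam • ΔX := by
      rw [polyEval, Fin.sum_univ_two]
      simp
    have heval : polyEval ![ΔY, ΔX] lam *ᵥ w = u := by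
      rw [h2, Matrix.add_mulVec, hYdef, hXdef]
      simp only [Matrix.smul_mulVec]
      rw [rankTwo_mulVec _ _ _ _ hwp, rankTwo_mulVec _ _ _ _ hwp, hup, hμdef, hT2,
        ← hmc]
      simp only [← hsdef]
      ext i
      simp only [Pi.add_apply, Pi.smul_apply, smul_eq_mul, Pi.star_apply]
      field_simp
      ring
    rw [Matrix.add_mulVec, hLw, heval, hudef]
    simp
  · have hsum0 : (0:ℝ) ≤ ∑ j : Fin (1+1), frobNormSq (![ΔY, ΔX] j) :=
      Finset.sum_nonneg fun j _ => frobNormSq_nonneg _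
    have hn0 : polyNormF ![ΔY, ΔX] ^ 2 = frobNormSq ΔY + frobNormSq ΔX := by
      rw [polyNormF, Real.sq_sqrt hsum0, Fin.sum_univ_two]
      simp
    have hm1 : ‖(-1 : ℂ)‖ = 1 := by norm_num
    have hfY : frobNormSq ΔY = 1/(s*(1+tt))^2 * (2 * (s * vecNormSq p)) := by
      rw [hYdef, frobNormSq_smul, rankTwo_frob _ _ _ _ hwp hm1]
      simp only [← hsdef]
      have e1 : ‖1/(((s:ℝ):ℂ)*T)‖^2 = 1/(s*(1+tt))^2 := by
        rw [hTdef, show ((s:ℝ):ℂ)*((1+tt:ℝ):ℂ) = (((s*(1+tt)):ℝ):ℂ) by push_cast; ring,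
          norm_div, norm_one, Complex.norm_real, Real.norm_eq_abs,
          abs_of_pos (by positivity), div_pow, one_pow]
      rw [e1, norm_zero]
      try ring
    have hfX : frobNormSq ΔX
        = tt/(s*(1+tt))^2 * (2 * (s * vecNormSq p) + (1+tt)^2*‖β‖^2/tt^2 * s^2) := by
      rw [hXdef, frobNormSq_smul, rankTwo_frob _ _ _ _ hwp norm_one]
      simp only [← hsdef]
      have e1 : ‖(conj lam)/(((s:ℝ):ℂ)*T)‖^2 = tt/(s*(1+tt))^2 := by
        rw [hTdef, show ((s:ℝ):ℂ)*((1+tt:ℝ):ℂ) = (((s*(1+tt)):ℝ):ℂ) by push_cast; ring,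
          norm_div, Complex.norm_real, Real.norm_eq_abs, abs_of_pos (by positivity),
          RCLike.norm_conj, div_pow, ← httdef]
      have e2 : ‖μ'‖^2 = (1+tt)^2*‖β‖^2/tt^2 := by
        rw [hμdef, norm_div, norm_mul, hTdef, Complex.norm_real, Complex.norm_real,
          Real.norm_eq_abs, Real.norm_eq_abs, abs_of_pos h1tt, abs_of_pos httpos,
          div_pow, mul_pow]
      rw [e1, e2]
      try ring
    have hcross : star p ⬝ᵥ (β • star w) = 0 := by
      rw [dotProduct_smul, star_dot_star, (dotProduct_comm p w).trans hwp, star_zero,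
        smul_zero]
    have hdecomp : vecNormSq u = vecNormSq p + ‖β‖^2 * s := by
      rw [hup, vecNormSq_add, vecNormSq_smul, vecNormSq_star, hcross]
      simp [hsdef]
    have hgu : vecNormSq g = vecNormSq u := by rw [hudef, vecNormSq_neg]
    rw [hn0, hfY, hfX, hgu, hdecomp]
    have hP0 : 0 ≤ vecNormSq p := vecNormSq_nonneg p
    have hb0 : (0:ℝ) ≤ ‖β‖^2 := sq_nonneg _
    have lhs_eq : 1/(s*(1+tt))^2 * (2 * (s * vecNormSq p))
        + tt/(s*(1+tt))^2 * (2 * (s * vecNormSq p) + (1+tt)^2*‖β‖^2/tt^2 * s^2)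
        = 2 * vecNormSq p/(s*(1+tt)) + ‖β‖^2/tt := by
      field_simp
      ring
    rw [lhs_eq]
    have h1 : 2 * vecNormSq p/(s*(1+tt)) ≤ 2 * vecNormSq p/X := by
      apply div_le_div_of_nonneg_left (by positivity) hX
      calc X ≤ (1 + tt) * s := hX1
        _ = s * (1+tt) := by ring
    have h2 : ‖β‖^2/tt ≤ 2*‖β‖^2*s/X := by
      rw [div_le_div_iff₀ httpos hX]
      nlinarith
    calc 2 * vecNormSq p/(s*(1+tt)) + ‖β‖^2/tt
        ≤ 2 * vecNormSq p/X + 2*‖β‖^2*s/X := add_le_add h1 h2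
      _ = 2 * (vecNormSq p + ‖β‖^2 * s)/X := by ring

end Constructions

/-- Structured backward errors of a T-even matrix polynomial under a
T-even linearization (ansatz vector with `Σv = v`, optimal for `|λ| ≤ 1`) and under a
T-odd linearization (ansatz vector with `Σv = −v`, optimal for `|λ| ≥ 1`), for both the
Frobenius and the spectral norm. -/
theorem Teven_linearization_backward_error {n m : ℕ} (hm : 1 ≤ m)
    (A : Fin (m+1) → Matrix (Fin n) (Fin n) ℂ)
    (hA : A ∈ TevenPoly) (hreg : Regular A) (hlead : A (Fin.last m) ≠ 0)
    (lam : ℂ) (x : Fin n → ℂ) (hx : star x ⬝ᵥ x = 1)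
    (Be : Fin (1+1) → Matrix (Fin m × Fin n) (Fin m × Fin n) ℂ)
    (hBe : Be ∈ TevenPoly)
    (ve : Fin m → ℂ) (hve : vecNormSq ve = 1)
    (hveSigma : ∀ i : Fin m, ((-1 : ℂ)) ^ (m - 1 - (i : ℕ)) * ve i = ve i)
    (hLe : InL1 A Be ve)
    (Bo : Fin (1+1) → Matrix (Fin m × Fin n) (Fin m × Fin n) ℂ)
    (hBo : Bo ∈ ToddPoly)
    (vo : Fin m → ℂ) (hvo : vecNormSq vo = 1)
    (hvoSigma : ∀ i : Fin m, ((-1 : ℂ)) ^ (m - 1 - (i : ℕ)) * vo i = -(vo i))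
    (hLo : InL1 A Bo vo) :
    (‖lam‖ ≤ 1 →
      (Real.sqrt (((m : ℝ) + 1) / (2 * m)) * eta polyNormF Set.univ lam x A
          ≤ eta polyNormF TevenPoly lam (kronVec (lamVec m lam) x) Be ∧
        eta polyNormF TevenPoly lam (kronVec (lamVec m lam) x) Be
          ≤ Real.sqrt 2 * eta polyNormF Set.univ lam x A) ∧
      (Real.sqrt (((m : ℝ) + 1) / (2 * m)) * eta polyNorm2 Set.univ lam x A
          ≤ eta polyNorm2 TevenPoly lam (kronVec (lamVec m lam) x) Be ∧
        eta polyNorm2 TevenPoly lam (kronVec (lamVec m lam) x) Be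
          ≤ Real.sqrt 2 * eta polyNorm2 Set.univ lam x A)) ∧
    (1 ≤ ‖lam‖ →
      (Real.sqrt (((m : ℝ) + 1) / (2 * m)) * eta polyNormF Set.univ lam x A
          ≤ eta polyNormF ToddPoly lam (kronVec (lamVec m lam) x) Bo ∧
        eta polyNormF ToddPoly lam (kronVec (lamVec m lam) x) Bo
          ≤ Real.sqrt 2 * eta polyNormF Set.univ lam x A) ∧
      (Real.sqrt (((m : ℝ) + 1) / (2 * m)) * eta polyNorm2 Set.univ lam x A
          ≤ eta polyNorm2 ToddPoly lam (kronVec (lamVec m lam) x) Bo ∧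
        eta polyNorm2 ToddPoly lam (kronVec (lamVec m lam) x) Bo
          ≤ Real.sqrt 2 * eta polyNorm2 Set.univ lam x A)) := by
  classical
  have hx1 : vecNormSq x = 1 := star_dot_x_one x hx
  set w : Fin m × Fin n → ℂ := kronVec (lamVec m lam) x with hwdef
  set r : Fin n → ℂ := polyEval A lam *ᵥ x with hrdef
  have htt : (0:ℝ) ≤ ‖lam‖^2 := sq_nonneg _
  have hsw : vecNormSq w = ∑ j ∈ Finset.range m, (‖lam‖^2)^j := by
    rw [hwdef, kron_vecNormSq, hx1, mul_one, vecNormSq_lamVec]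
  have hS : lamNormSq m lam = ∑ j ∈ Finset.range (m+1), (‖lam‖^2)^j := lamNormSq_eq m lam
  have hSpos : 0 < lamNormSq m lam := lamNormSq_pos m lam
  have hswpos : 0 < vecNormSq w := by
    rw [hsw]; exact lt_of_lt_of_le one_pos (geomA_ge_one hm htt)
  set c : ℝ := vecNorm r / Real.sqrt (lamNormSq m lam) with hcdef
  have hc0 : 0 ≤ c := div_nonneg (vecNorm_nonneg r) (Real.sqrt_nonneg _)
  obtain ⟨ΔA0, hcond0, hnorm0⟩ := univ_construct lam x hx A
  have hnorm0' : polyNormF ΔA0 = c := by rw [hcdef, hrdef]; exact hnorm0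
  have hetaF_le : eta polyNormF Set.univ lam x A ≤ c :=
    eta_le_of_elem _ _ _ _ _ _ (fun D => polyNormF_nonneg D)
      ⟨ΔA0, Set.mem_univ _, hcond0, hnorm0'.le⟩
  have heta2_le : eta polyNorm2 Set.univ lam x A ≤ c :=
    eta_le_of_elem _ _ _ _ _ _ (fun D => polyNorm2_nonneg D)
      ⟨ΔA0, Set.mem_univ _, hcond0, (polyNorm2_le_polyNormF ΔA0).trans hnorm0'.le⟩
  have hc_le2 : ∀ D : Fin (m+1) → Matrix (Fin n) (Fin n) ℂ,
      (polyEval A lam + polyEval D lam) *ᵥ x = 0 → c ≤ polyNorm2 D := by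
    intro D hcnd
    have h1 := univ_elem_ge lam x hx1 A D hcnd
    rw [hcdef, hrdef]
    exact h1
  have hetaF_ge : c ≤ eta polyNormF Set.univ lam x A :=
    le_eta_of_forall _ _ _ _ _ _ ⟨ΔA0, Set.mem_univ _, hcond0⟩
      (fun D _ hcnd => (hc_le2 D hcnd).trans (polyNorm2_le_polyNormF D))
  have heta2_ge : c ≤ eta polyNorm2 Set.univ lam x A :=
    le_eta_of_forall _ _ _ _ _ _ ⟨ΔA0, Set.mem_univ _, hcond0⟩
      (fun D _ hcnd => hc_le2 D hcnd)
  have hgnorm : vecNormSq (kronVec ve r) = vecNormSq r := by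
    rw [kron_vecNormSq, hve, one_mul]
  have hgnormo : vecNormSq (kronVec vo r) = vecNormSq r := by
    rw [kron_vecNormSq, hvo, one_mul]
  have hX1 : lamNormSq m lam ≤ (1 + ‖lam‖^2) * vecNormSq w := by
    rw [hS, hsw]; exact S_le_onet hm htt
  have hglue : Real.sqrt (((m:ℝ)+1)/(2*m)) * c
      ≤ vecNorm r / Real.sqrt ((1 + ‖lam‖^2) * vecNormSq w) := by
    have h3 := lower_glue hm (‖lam‖^2) (vecNorm r) htt (vecNorm_nonneg r)
    rw [← hS, ← hsw] at h3
    rw [hcdef]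
    exact h3
  have hsqrtc : ∀ R : ℝ, 0 ≤ R → Real.sqrt (2 * R / lamNormSq m lam)
      = Real.sqrt 2 * (Real.sqrt R / Real.sqrt (lamNormSq m lam)) := by
    intro R hR
    rw [mul_div_assoc, Real.sqrt_mul (by norm_num), Real.sqrt_div hR]
  constructor
  · -- even branch
    intro hl1
    have hLwE : polyEval Be lam *ᵥ w = kronVec ve r := by
      rw [hwdef, hrdef]; exact hLe lam x
    have htt1 : ‖lam‖^2 ≤ 1 := by nlinarith [norm_nonneg lam]
    have hX2 : lamNormSq m lam ≤ 2 * vecNormSq w := by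
      rw [hS, hsw]; exact S_le_two hm htt htt1
    obtain ⟨ΔB, hmem, hcond, hnorm⟩ := even_construct lam Be w (kronVec ve r) hswpos
      hLwE (lamNormSq m lam) hSpos hX1 hX2
    have hFB : polyNormF ΔB ≤ Real.sqrt 2 * c := by
      have h1 : polyNormF ΔB ^ 2 ≤ 2 * vecNormSq r / lamNormSq m lam := by
        rw [← hgnorm]; exact hnorm
      calc polyNormF ΔB = Real.sqrt (polyNormF ΔB ^ 2) :=
            (Real.sqrt_sq (polyNormF_nonneg _)).symm
        _ ≤ Real.sqrt (2 * vecNormSq r / lamNormSq m lam) := Real.sqrt_le_sqrt h1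
        _ = Real.sqrt 2 * c := by
            rw [hsqrtc _ (vecNormSq_nonneg r), hcdef, vecNormSq_eq,
              Real.sqrt_sq (vecNorm_nonneg r)]
    have hlow_common : ∀ D : Fin (1+1) → Matrix (Fin m × Fin n) (Fin m × Fin n) ℂ,
        (polyEval Be lam + polyEval D lam) *ᵥ w = 0 →
        Real.sqrt (((m:ℝ)+1)/(2*m)) * c ≤ polyNorm2 D := by
      intro D hcnd
      have h1 := pencil_elem_ge lam Be D w hswpos hcnd
      rw [hLwE] at h1
      have h2 : vecNorm (kronVec ve r) = vecNorm r := by rw [vecNorm, hgnorm, vecNorm]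
      rw [h2] at h1
      exact hglue.trans h1
    refine ⟨⟨?_, ?_⟩, ?_, ?_⟩
    · exact le_eta_of_forall _ _ _ _ _ _ ⟨ΔB, hmem, hcond⟩ (fun D hD hcnd =>
        (mul_le_mul_of_nonneg_left hetaF_le (Real.sqrt_nonneg _)).trans
          ((hlow_common D hcnd).trans (polyNorm2_le_polyNormF D)))
    · exact (eta_le_of_elem _ _ _ _ _ _ (fun D => polyNormF_nonneg D)
        ⟨ΔB, hmem, hcond, hFB⟩).trans
        (mul_le_mul_of_nonneg_left hetaF_ge (Real.sqrt_nonneg 2))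
    · exact le_eta_of_forall _ _ _ _ _ _ ⟨ΔB, hmem, hcond⟩ (fun D hD hcnd =>
        (mul_le_mul_of_nonneg_left heta2_le (Real.sqrt_nonneg _)).trans
          (hlow_common D hcnd))
    · exact (eta_le_of_elem _ _ _ _ _ _ (fun D => polyNorm2_nonneg D)
        ⟨ΔB, hmem, hcond, (polyNorm2_le_polyNormF ΔB).trans hFB⟩).trans
        (mul_le_mul_of_nonneg_left heta2_ge (Real.sqrt_nonneg 2))
  · -- odd branch
    intro hl1
    have hLwO : polyEval Bo lam *ᵥ w = kronVec vo r := by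
      rw [hwdef, hrdef]; exact hLo lam x
    have htt1 : 1 ≤ ‖lam‖^2 := by nlinarith [norm_nonneg lam]
    have hX2 : lamNormSq m lam ≤ 2 * ‖lam‖^2 * vecNormSq w := by
      rw [hS, hsw]; exact S_le_twot hm htt1
    obtain ⟨ΔB, hmem, hcond, hnorm⟩ := odd_construct lam hl1 Bo w (kronVec vo r) hswpos
      hLwO (lamNormSq m lam) hSpos hX1 hX2
    have hFB : polyNormF ΔB ≤ Real.sqrt 2 * c := by
      have h1 : polyNormF ΔB ^ 2 ≤ 2 * vecNormSq r / lamNormSq m lam := by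
        rw [← hgnormo]; exact hnorm
      calc polyNormF ΔB = Real.sqrt (polyNormF ΔB ^ 2) :=
            (Real.sqrt_sq (polyNormF_nonneg _)).symm
        _ ≤ Real.sqrt (2 * vecNormSq r / lamNormSq m lam) := Real.sqrt_le_sqrt h1
        _ = Real.sqrt 2 * c := by
            rw [hsqrtc _ (vecNormSq_nonneg r), hcdef, vecNormSq_eq,
              Real.sqrt_sq (vecNorm_nonneg r)]
    have hlow_common : ∀ D : Fin (1+1) → Matrix (Fin m × Fin n) (Fin m × Fin n) ℂ,
        (polyEval Bo lam + polyEval D lam) *ᵥ w = 0 →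
        Real.sqrt (((m:ℝ)+1)/(2*m)) * c ≤ polyNorm2 D := by
      intro D hcnd
      have h1 := pencil_elem_ge lam Bo D w hswpos hcnd
      rw [hLwO] at h1
      have h2 : vecNorm (kronVec vo r) = vecNorm r := by rw [vecNorm, hgnormo, vecNorm]
      rw [h2] at h1
      exact hglue.trans h1
    refine ⟨⟨?_, ?_⟩, ?_, ?_⟩
    · exact le_eta_of_forall _ _ _ _ _ _ ⟨ΔB, hmem, hcond⟩ (fun D hD hcnd =>
        (mul_le_mul_of_nonneg_left hetaF_le (Real.sqrt_nonneg _)).trans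
          ((hlow_common D hcnd).trans (polyNorm2_le_polyNormF D)))
    · exact (eta_le_of_elem _ _ _ _ _ _ (fun D => polyNormF_nonneg D)
        ⟨ΔB, hmem, hcond, hFB⟩).trans
        (mul_le_mul_of_nonneg_left hetaF_ge (Real.sqrt_nonneg 2))
    · exact le_eta_of_forall _ _ _ _ _ _ ⟨ΔB, hmem, hcond⟩ (fun D hD hcnd =>
        (mul_le_mul_of_nonneg_left heta2_le (Real.sqrt_nonneg _)).trans
          (hlow_common D hcnd))
    · exact (eta_le_of_elem _ _ _ _ _ _ (fun D => polyNorm2_nonneg D)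
        ⟨ΔB, hmem, hcond, (polyNorm2_le_polyNormF ΔB).trans hFB⟩).trans
        (mul_le_mul_of_nonneg_left heta2_ge (Real.sqrt_nonneg 2))
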